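/- Let G₁ be a linearly ordered group and G₂ a directed po-group. Then the lexicographic product G₁ ×lex G₂ satisfies RDP₂ if and only if G₂ satisfies RDP₂. -/

import Mathlib

/-! Riesz decomposition properties relative to explicit multiplication `mul`,
unit `one`, and order relation `le`, together with the lexicographic product
order and (unrestricted/restricted, right/left) wreath products of po-groups. -/

/-- The Riesz decomposition property (RDP). -/
def RDPWith {M : Type*} (mul : M → M → M) (one : M) (le : M → M → Prop) : Prop :=
  ∀ a₁ a₂ b₁ b₂ : M,
    le one a₁ → le one a₂ → le one b₁ → le one b₂ → mul a₁ a₂ = mul b₁ b₂ →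
    ∃ c₁₁ c₁₂ c₂₁ c₂₂ : M,
      le one c₁₁ ∧ le one c₁₂ ∧ le one c₂₁ ∧ le one c₂₂ ∧
      a₁ = mul c₁₁ c₁₂ ∧ a₂ = mul c₂₁ c₂₂ ∧ b₁ = mul c₁₁ c₂₁ ∧ b₂ = mul c₁₂ c₂₂

/-- The Riesz decomposition property RDP₁ (commutativity below the
cross-diagonal entries `c₁₂`, `c₂₁`). -/
def RDP1With {M : Type*} (mul : M → M → M) (one : M) (le : M → M → Prop) : Prop :=
  ∀ a₁ a₂ b₁ b₂ : M,
    le one a₁ → le one a₂ → le one b₁ → le one b₂ → mul a₁ a₂ = mul b₁ b₂ →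
    ∃ c₁₁ c₁₂ c₂₁ c₂₂ : M,
      le one c₁₁ ∧ le one c₁₂ ∧ le one c₂₁ ∧ le one c₂₂ ∧
      a₁ = mul c₁₁ c₁₂ ∧ a₂ = mul c₂₁ c₂₂ ∧ b₁ = mul c₁₁ c₂₁ ∧ b₂ = mul c₁₂ c₂₂ ∧
      (∀ x y : M, le one x → le x c₁₂ → le one y → le y c₂₁ → mul x y = mul y x)

/-- The Riesz decomposition property RDP₂ (the infimum of `c₁₂` and `c₂₁`
exists and equals `one`; the last clause, together with `le one c₁₂` and
`le one c₂₁`, says exactly that `one` is the greatest lower bound). -/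
def RDP2With {M : Type*} (mul : M → M → M) (one : M) (le : M → M → Prop) : Prop :=
  ∀ a₁ a₂ b₁ b₂ : M,
    le one a₁ → le one a₂ → le one b₁ → le one b₂ → mul a₁ a₂ = mul b₁ b₂ →
    ∃ c₁₁ c₁₂ c₂₁ c₂₂ : M,
      le one c₁₁ ∧ le one c₁₂ ∧ le one c₂₁ ∧ le one c₂₂ ∧
      a₁ = mul c₁₁ c₁₂ ∧ a₂ = mul c₂₁ c₂₂ ∧ b₁ = mul c₁₁ c₂₁ ∧ b₂ = mul c₁₂ c₂₂ ∧
      (∀ z : M, le z c₁₂ → le z c₂₁ → le z one)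

/-- RDP for the sub-po-group carried by the subset `S`. -/
def RDPWithOn {M : Type*} (S : Set M) (mul : M → M → M) (one : M)
    (le : M → M → Prop) : Prop :=
  ∀ a₁ a₂ b₁ b₂ : M, a₁ ∈ S → a₂ ∈ S → b₁ ∈ S → b₂ ∈ S →
    le one a₁ → le one a₂ → le one b₁ → le one b₂ → mul a₁ a₂ = mul b₁ b₂ →
    ∃ c₁₁ c₁₂ c₂₁ c₂₂ : M, c₁₁ ∈ S ∧ c₁₂ ∈ S ∧ c₂₁ ∈ S ∧ c₂₂ ∈ S ∧
      le one c₁₁ ∧ le one c₁₂ ∧ le one c₂₁ ∧ le one c₂₂ ∧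
      a₁ = mul c₁₁ c₁₂ ∧ a₂ = mul c₂₁ c₂₂ ∧ b₁ = mul c₁₁ c₂₁ ∧ b₂ = mul c₁₂ c₂₂

/-- RDP₁ for the sub-po-group carried by the subset `S`. -/
def RDP1WithOn {M : Type*} (S : Set M) (mul : M → M → M) (one : M)
    (le : M → M → Prop) : Prop :=
  ∀ a₁ a₂ b₁ b₂ : M, a₁ ∈ S → a₂ ∈ S → b₁ ∈ S → b₂ ∈ S →
    le one a₁ → le one a₂ → le one b₁ → le one b₂ → mul a₁ a₂ = mul b₁ b₂ →
    ∃ c₁₁ c₁₂ c₂₁ c₂₂ : M, c₁₁ ∈ S ∧ c₁₂ ∈ S ∧ c₂₁ ∈ S ∧ c₂₂ ∈ S ∧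
      le one c₁₁ ∧ le one c₁₂ ∧ le one c₂₁ ∧ le one c₂₂ ∧
      a₁ = mul c₁₁ c₁₂ ∧ a₂ = mul c₂₁ c₂₂ ∧ b₁ = mul c₁₁ c₂₁ ∧ b₂ = mul c₁₂ c₂₂ ∧
      (∀ x y : M, x ∈ S → y ∈ S →
        le one x → le x c₁₂ → le one y → le y c₂₁ → mul x y = mul y x)

/-- RDP₂ for the sub-po-group carried by the subset `S`. -/
def RDP2WithOn {M : Type*} (S : Set M) (mul : M → M → M) (one : M)
    (le : M → M → Prop) : Prop :=
  ∀ a₁ a₂ b₁ b₂ : M, a₁ ∈ S → a₂ ∈ S → b₁ ∈ S → b₂ ∈ S →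
    le one a₁ → le one a₂ → le one b₁ → le one b₂ → mul a₁ a₂ = mul b₁ b₂ →
    ∃ c₁₁ c₁₂ c₂₁ c₂₂ : M, c₁₁ ∈ S ∧ c₁₂ ∈ S ∧ c₂₁ ∈ S ∧ c₂₂ ∈ S ∧
      le one c₁₁ ∧ le one c₁₂ ∧ le one c₂₁ ∧ le one c₂₂ ∧
      a₁ = mul c₁₁ c₁₂ ∧ a₂ = mul c₂₁ c₂₂ ∧ b₁ = mul c₁₁ c₂₁ ∧ b₂ = mul c₁₂ c₂₂ ∧
      (∀ z : M, z ∈ S → le z c₁₂ → le z c₂₁ → le z one)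

/-- The Riesz interpolation property (RIP). -/
def RIPWith {M : Type*} (le : M → M → Prop) : Prop :=
  ∀ a₁ a₂ b₁ b₂ : M, le a₁ b₁ → le a₁ b₂ → le a₂ b₁ → le a₂ b₂ →
    ∃ c : M, le a₁ c ∧ le a₂ c ∧ le c b₁ ∧ le c b₂

/-- RIP for the subposet carried by the subset `S`. -/
def RIPWithOn {M : Type*} (S : Set M) (le : M → M → Prop) : Prop :=
  ∀ a₁ a₂ b₁ b₂ : M, a₁ ∈ S → a₂ ∈ S → b₁ ∈ S → b₂ ∈ S →
    le a₁ b₁ → le a₁ b₂ → le a₂ b₁ → le a₂ b₂ →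
    ∃ c ∈ S, le a₁ c ∧ le a₂ c ∧ le c b₁ ∧ le c b₂

/-- The lexicographic order on a product: `(g₁,h₁) ≤ (g₂,h₂)` iff `g₁ < g₂`,
or `g₁ = g₂` and `h₁ ≤ h₂`. -/
def lexLE {A B : Type*} [PartialOrder A] [LE B] (p q : A × B) : Prop :=
  p.1 < q.1 ∨ (p.1 = q.1 ∧ p.2 ≤ q.2)

/-- A poset is an antilattice if only comparable pairs of elements have a
join or a meet. -/
def IsAntilattice (G : Type*) [PartialOrder G] : Prop :=
  ∀ a b : G, ((∃ s, IsLUB {a, b} s) ∨ (∃ s, IsGLB {a, b} s)) → a ≤ b ∨ b ≤ a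

/-- Multiplication of the unrestricted Wreath product `A Wr G`:
`(n,⟨g_a⟩)·(m,⟨h_a⟩) = (n·m, ⟨g_a·h_{a·n}⟩)`. -/
def wrMul {A G : Type*} [Mul A] [Mul G] (p q : A × (A → G)) : A × (A → G) :=
  (p.1 * q.1, fun a => p.2 a * q.2 (a * p.1))

/-- The unit of the Wreath product `A Wr G`. -/
def wrOne (A G : Type*) [One A] [One G] : A × (A → G) :=
  (1, fun _ => 1)

/-- The order of the Wreath product `A Wr G`: `(n,⟨g_a⟩) ≤ (m,⟨h_a⟩)` iff
`n < m`, or `n = m` and `g_a ≤ h_a` for all `a`. -/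
def wrLE {A G : Type*} [PartialOrder A] [LE G] (p q : A × (A → G)) : Prop :=
  p.1 < q.1 ∨ (p.1 = q.1 ∧ ∀ a, p.2 a ≤ q.2 a)

/-- The carrier of the restricted Wreath product `A wr G`: elements whose
second component equals `1` at all but finitely many places. -/
def wrS (A G : Type*) [One G] : Set (A × (A → G)) :=
  {p | (Function.mulSupport p.2).Finite}

/-- Multiplication of the wreath products over `ℤ`:
`(n,⟨g_i⟩)·(m,⟨h_i⟩) = (n+m, ⟨g_i·h_{i+n}⟩)`. -/
def zwrMul {G : Type*} [Mul G] (p q : ℤ × (ℤ → G)) : ℤ × (ℤ → G) :=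
  (p.1 + q.1, fun i => p.2 i * q.2 (i + p.1))

/-- The unit of the wreath products over `ℤ`. -/
def zwrOne (G : Type*) [One G] : ℤ × (ℤ → G) :=
  (0, fun _ => 1)

/-- The inverse in the wreath products over `ℤ`. -/
def zwrInv {G : Type*} [Inv G] (p : ℤ × (ℤ → G)) : ℤ × (ℤ → G) :=
  (-p.1, fun i => (p.2 (i - p.1))⁻¹)

/-- The carrier of the (restricted) wreath products over `ℤ`: elements with
`g_i = 1` for all but finitely many `i`. -/
def zwrS (G : Type*) [One G] : Set (ℤ × (ℤ → G)) :=
  {p | (Function.mulSupport p.2).Finite}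

/-- Strict positivity in the right wreath product `ℤ →wr G`: either `n > 0`,
or `n = 0`, some `g_i ≠ 1`, and `g_j > 1` where `j` is the greatest index `i`
with `g_i ≠ 1`. -/
def rPos {G : Type*} [One G] [LT G] (p : ℤ × (ℤ → G)) : Prop :=
  0 < p.1 ∨ (p.1 = 0 ∧ ∃ j : ℤ, 1 < p.2 j ∧ ∀ i : ℤ, j < i → p.2 i = 1)

/-- Strict positivity in the left wreath product `ℤ ←wr G`: either `n > 0`,
or `n = 0`, some `g_i ≠ 1`, and `g_j > 1` where `j` is the least index `i`
with `g_i ≠ 1`. -/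
def lPos {G : Type*} [One G] [LT G] (p : ℤ × (ℤ → G)) : Prop :=
  0 < p.1 ∨ (p.1 = 0 ∧ ∃ j : ℤ, 1 < p.2 j ∧ ∀ i : ℤ, i < j → p.2 i = 1)

/-- The order of the right wreath product `ℤ →wr G`. -/
def rLE {G : Type*} [Group G] [LT G] (p q : ℤ × (ℤ → G)) : Prop :=
  p = q ∨ rPos (zwrMul (zwrInv p) q)

/-- The order of the left wreath product `ℤ ←wr G`. -/
def lLE {G : Type*} [Group G] [LT G] (p q : ℤ × (ℤ → G)) : Prop :=
  p = q ∨ lPos (zwrMul (zwrInv p) q)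

set_option linter.unusedSectionVars false
section Aux
variable {G : Type*} [Group G] [PartialOrder G]
  [CovariantClass G G (· * ·) (· ≤ ·)]
  [CovariantClass G G (Function.swap (· * ·)) (· ≤ ·)]

theorem aux_rq_le (q r : G) (h : ∀ z, z ≤ q → z ≤ r → z ≤ 1)
    (u : G) (hqu : q ≤ u) (hru : r ≤ u) : r * q ≤ u := by
  have h1 : q * u⁻¹ * r ≤ q := by
    have h0 : u⁻¹ * r ≤ 1 := by
      have := mul_le_mul_right hru u⁻¹
      simpa using this
    calc q * u⁻¹ * r = q * (u⁻¹ * r) := by rw [mul_assoc]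
      _ ≤ q * 1 := mul_le_mul_right h0 q
      _ = q := mul_one q
  have h2 : q * u⁻¹ * r ≤ r := by
    have h0 : q * u⁻¹ ≤ 1 := by
      have := mul_le_mul_left hqu u⁻¹
      simpa using this
    calc q * u⁻¹ * r ≤ 1 * r := mul_le_mul_left h0 r
      _ = r := one_mul r
  have h3 : q * u⁻¹ * r ≤ 1 := h _ h1 h2
  have h4 : u⁻¹ ≤ (r * q)⁻¹ := by
    have := mul_le_mul_left (mul_le_mul_right h3 q⁻¹) r⁻¹
    have e1 : q⁻¹ * (q * u⁻¹ * r) * r⁻¹ = u⁻¹ := by group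
    have e2 : q⁻¹ * 1 * r⁻¹ = (r * q)⁻¹ := by group
    rwa [e1, e2] at this
  exact (inv_le_inv_iff).mp h4

theorem aux_comm (q r : G) (hq : 1 ≤ q) (hr : 1 ≤ r)
    (h : ∀ z, z ≤ q → z ≤ r → z ≤ 1) : q * r = r * q := by
  have h1 : r * q ≤ q * r := aux_rq_le q r h (q * r)
    (le_mul_of_one_le_right' hr) (le_mul_of_one_le_left' hq)
  have h2 : q * r ≤ r * q := aux_rq_le r q (fun z h1 h2 => h z h2 h1) (r * q)
    (le_mul_of_one_le_right' hq) (le_mul_of_one_le_left' hr)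
  exact le_antisymm h2 h1

theorem aux_inv_comm (q r : G) (hcomm : q * r = r * q) : r⁻¹ * q = q * r⁻¹ := by
  have := congrArg (fun x => r⁻¹ * x * r⁻¹) hcomm
  simpa [mul_assoc] using this
end Aux
set_option linter.unusedSectionVars true

/-- For a linearly ordered group `G₁` and a directed po-group
`G₂`, the lexicographic product `G₁ ×lex G₂` satisfies RDP₂ iff `G₂` does. -/
theorem lex_rdp2_iff {G₁ G₂ : Type*} [Group G₁] [LinearOrder G₁]
    [CovariantClass G₁ G₁ (· * ·) (· ≤ ·)]
    [CovariantClass G₁ G₁ (Function.swap (· * ·)) (· ≤ ·)]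
    [Group G₂] [PartialOrder G₂]
    [CovariantClass G₂ G₂ (· * ·) (· ≤ ·)]
    [CovariantClass G₂ G₂ (Function.swap (· * ·)) (· ≤ ·)]
    (hdir : ∀ x y : G₂, ∃ z : G₂, x ≤ z ∧ y ≤ z) :
    RDP2With (fun p q : G₁ × G₂ => p * q) 1 lexLE ↔
      RDP2With (fun a b : G₂ => a * b) 1 (· ≤ ·) := by
  have key1 : ∀ x y : G₁, 1 ≤ x → 1 ≤ y → x * y = 1 → x = 1 ∧ y = 1 := by
    intro x y hx hy hxy
    have hx1 : x = 1 := le_antisymm (by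
      have : x = y⁻¹ := eq_inv_of_mul_eq_one_left hxy
      rw [this]; exact inv_le_one'.mpr hy) hx
    refine ⟨hx1, ?_⟩
    rw [hx1, one_mul] at hxy; exact hxy
  constructor
  · -- lex RDP₂ → G₂ RDP₂
    intro H a₁ a₂ b₁ b₂ ha₁ ha₂ hb₁ hb₂ heq
    obtain ⟨c₁₁, c₁₂, c₂₁, c₂₂, h1, h2, h3, h4, e1, e2, e3, e4, hinf⟩ :=
      H ((1 : G₁), a₁) (1, a₂) (1, b₁) (1, b₂)
        (Or.inr ⟨rfl, ha₁⟩) (Or.inr ⟨rfl, ha₂⟩) (Or.inr ⟨rfl, hb₁⟩) (Or.inr ⟨rfl, hb₂⟩)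
        (by have heq2 : a₁ * a₂ = b₁ * b₂ := heq
            simp only [Prod.mk_mul_mk, one_mul, heq2])
    have f1 : c₁₁.1 * c₁₂.1 = 1 := (congrArg Prod.fst e1).symm
    have f2 : c₂₁.1 * c₂₂.1 = 1 := (congrArg Prod.fst e2).symm
    have pos_fst : ∀ c : G₁ × G₂, lexLE 1 c → 1 ≤ c.1 := by
      intro c hc
      rcases hc with h | ⟨h, _⟩
      · exact le_of_lt (by simpa using h)
      · exact le_of_eq (by simpa using h)
    obtain ⟨g11, g12⟩ := key1 _ _ (pos_fst _ h1) (pos_fst _ h2) f1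
    obtain ⟨g21, g22⟩ := key1 _ _ (pos_fst _ h3) (pos_fst _ h4) f2
    have pos_snd : ∀ c : G₁ × G₂, lexLE 1 c → c.1 = 1 → 1 ≤ c.2 := by
      intro c hc hc1
      rcases hc with h | ⟨_, h⟩
      · rw [hc1] at h; exact absurd h (by simp)
      · simpa using h
    refine ⟨c₁₁.2, c₁₂.2, c₂₁.2, c₂₂.2, pos_snd _ h1 g11, pos_snd _ h2 g12,
      pos_snd _ h3 g21, pos_snd _ h4 g22,
      congrArg Prod.snd e1, congrArg Prod.snd e2, congrArg Prod.snd e3,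
      congrArg Prod.snd e4, ?_⟩
    intro z hz1 hz2
    have hz := hinf ((1 : G₁), z) (Or.inr ⟨g12.symm, hz1⟩) (Or.inr ⟨g21.symm, hz2⟩)
    rcases hz with h | ⟨_, h⟩
    · exact absurd (by simpa using h) (lt_irrefl (1 : G₁))
    · simpa using h
  · -- G₂ RDP₂ → lex RDP₂
    intro H a₁ a₂ b₁ b₂ ha₁ ha₂ hb₁ hb₂ heq
    have heq' : a₁ * a₂ = b₁ * b₂ := heq
    rcases lt_trichotomy a₁.1 b₁.1 with hlt | heqf | hgt
    · refine ⟨a₁, 1, a₁⁻¹ * b₁, b₂, ha₁, Or.inr ⟨rfl, le_refl _⟩, Or.inl ?_, hb₂,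
        (mul_one a₁).symm, ?_, (mul_inv_cancel_left a₁ b₁).symm, (one_mul b₂).symm,
        fun z hz1 _ => hz1⟩
      · show (1 : G₁ × G₂).1 < (a₁⁻¹ * b₁).1
        have := mul_lt_mul_right hlt a₁.1⁻¹
        simpa using this
      · show a₂ = a₁⁻¹ * b₁ * b₂
        rw [mul_assoc, ← heq', inv_mul_cancel_left]
    · -- main case: equal first components
      have hfst : a₁.1 * a₂.1 = b₁.1 * b₂.1 := congrArg Prod.fst heq'
      have hfst2 : a₂.1 = b₂.1 := by
        rw [heqf] at hfst; exact mul_left_cancel hfst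
      have hsnd : a₁.2 * a₂.2 = b₁.2 * b₂.2 := congrArg Prod.snd heq'
      rcases ha₂ with h2lt | ⟨h2eq, h2le⟩
      · -- 1 < a₂.1
        have h2lt' : (1 : G₁) < a₂.1 := by simpa using h2lt
        obtain ⟨m, hm1, hm2, hmOK⟩ :
            ∃ m, m ≤ a₁.2 ∧ m ≤ b₁.2 ∧ (1 < a₁.1 ∨ (a₁.1 = 1 ∧ 1 ≤ m)) := by
          rcases ha₁ with h | ⟨h, hle⟩
          · obtain ⟨w, hw1, hw2⟩ := hdir a₁.2⁻¹ b₁.2⁻¹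
            refine ⟨w⁻¹, ?_, ?_, Or.inl (by simpa using h)⟩
            · simpa using inv_le_inv_iff.mpr hw1
            · simpa using inv_le_inv_iff.mpr hw2
          · have ha1f : a₁.1 = 1 := by simpa using h.symm
            have hb1f : b₁.1 = 1 := by rw [← heqf]; exact ha1f
            have hb1s : (1 : G₂) ≤ b₁.2 := by
              rcases hb₁ with h' | ⟨_, h'⟩
              · rw [hb1f] at h'; exact absurd h' (by simp)
              · simpa using h'
            exact ⟨1, by simpa using hle, hb1s, Or.inr ⟨ha1f, le_refl 1⟩⟩
        obtain ⟨d, hd1, hd2⟩ := hdir (m⁻¹ * a₁.2) (m⁻¹ * b₁.2)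
        obtain ⟨p, q, r, s, hp, hq, hr, hs, eA1, eA2, eB1, eB2, hinf⟩ :=
          H (m⁻¹ * a₁.2) ((m⁻¹ * a₁.2)⁻¹ * d) (m⁻¹ * b₁.2) ((m⁻¹ * b₁.2)⁻¹ * d)
            (by have := mul_le_mul_right hm1 m⁻¹; simpa using this)
            (by have := mul_le_mul_right hd1 (m⁻¹ * a₁.2)⁻¹
                simpa only [inv_mul_cancel] using this)
            (by have := mul_le_mul_right hm2 m⁻¹; simpa using this)
            (by have := mul_le_mul_right hd2 (m⁻¹ * b₁.2)⁻¹
                simpa only [inv_mul_cancel] using this)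
            (by show m⁻¹ * a₁.2 * ((m⁻¹ * a₁.2)⁻¹ * d) = m⁻¹ * b₁.2 * ((m⁻¹ * b₁.2)⁻¹ * d)
                rw [mul_inv_cancel_left, mul_inv_cancel_left])
        have eA1' : m⁻¹ * a₁.2 = p * q := eA1
        have eB1' : m⁻¹ * b₁.2 = p * r := eB1
        have hcomm : q * r = r * q := aux_comm q r hq hr hinf
        have hic : r⁻¹ * q = q * r⁻¹ := aux_inv_comm q r hcomm
        have ha12 : a₁.2 = m * (p * q) := by rw [← eA1', mul_inv_cancel_left]
        have hb12 : b₁.2 = m * (p * r) := by rw [← eB1', mul_inv_cancel_left]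
        refine ⟨(a₁.1, m * p), ((1 : G₁), q), ((1 : G₁), r), (a₂.1, r⁻¹ * a₂.2),
          ?_, Or.inr ⟨rfl, hq⟩, Or.inr ⟨rfl, hr⟩, Or.inl h2lt', ?_, ?_, ?_, ?_, ?_⟩
        · rcases hmOK with h | ⟨he, hm⟩
          · exact Or.inl (by simpa using h)
          · exact Or.inr ⟨by simpa using he.symm, le_trans hm (le_mul_of_one_le_right' hp)⟩
        · show a₁ = (a₁.1, m * p) * (1, q)
          rw [Prod.mk_mul_mk, mul_one, mul_assoc, ← ha12]
        · show a₂ = (1, r) * (a₂.1, r⁻¹ * a₂.2)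
          rw [Prod.mk_mul_mk, one_mul, mul_inv_cancel_left]
        · show b₁ = (a₁.1, m * p) * (1, r)
          rw [Prod.mk_mul_mk, mul_one, mul_assoc, ← hb12, heqf]
        · show b₂ = (1, q) * (a₂.1, r⁻¹ * a₂.2)
          rw [Prod.mk_mul_mk, one_mul]
          have hb22 : b₂.2 = b₁.2⁻¹ * (a₁.2 * a₂.2) := by
            rw [hsnd, inv_mul_cancel_left]
          have key2 : (m * (p * r))⁻¹ * (m * (p * q) * a₂.2) = r⁻¹ * q * a₂.2 := by
            group
          have hb22' : b₂.2 = q * (r⁻¹ * a₂.2) := by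
            rw [hb22, ha12, hb12, key2, hic, mul_assoc]
          rw [Prod.ext_iff]
          exact ⟨by simpa using hfst2.symm, by simpa using hb22'⟩
        · intro z hz1 hz2
          rcases hz1 with h | ⟨he, hle⟩
          · exact Or.inl (by simpa using h)
          · rcases hz2 with h | ⟨he2, hle2⟩
            · exact Or.inl (by simpa using h)
            · exact Or.inr ⟨by simpa using he, hinf z.2 hle hle2⟩
      · -- a₂.1 = 1
        have h2eq' : a₂.1 = 1 := by simpa using h2eq.symm
        have h2le' : (1 : G₂) ≤ a₂.2 := by simpa using h2le
        have hb2f : b₂.1 = 1 := by rw [← hfst2]; exact h2eq'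
        have hb2le : (1 : G₂) ≤ b₂.2 := by
          rcases hb₂ with h | ⟨_, h⟩
          · rw [hb2f] at h; exact absurd h (by simp)
          · simpa using h
        rcases ha₁ with h1lt | ⟨h1eq, h1le⟩
        · -- 1 < a₁.1, a₂.1 = 1 : mirrored construction
          have h1lt' : (1 : G₁) < a₁.1 := by simpa using h1lt
          obtain ⟨d, hd1, hd2⟩ := hdir a₂.2 b₂.2
          obtain ⟨p, q, r, s, hp, hq, hr, hs, eA1, eA2, eB1, eB2, hinf⟩ :=
            H (d * a₂.2⁻¹) a₂.2 (d * b₂.2⁻¹) b₂.2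
              (by have := mul_le_mul_left hd1 a₂.2⁻¹; simpa using this)
              h2le'
              (by have := mul_le_mul_left hd2 b₂.2⁻¹; simpa using this)
              hb2le
              (by show d * a₂.2⁻¹ * a₂.2 = d * b₂.2⁻¹ * b₂.2
                  rw [inv_mul_cancel_right, inv_mul_cancel_right])
          have eA2' : a₂.2 = r * s := eA2
          have eB2' : b₂.2 = q * s := eB2
          have hcomm : q * r = r * q := aux_comm q r hq hr hinf
          have hic : q⁻¹ * r = r * q⁻¹ := aux_inv_comm r q hcomm.symm
          refine ⟨(a₁.1, a₁.2 * q⁻¹), ((1 : G₁), q), ((1 : G₁), r), ((1 : G₁), s),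
            Or.inl (by simpa using h1lt'), Or.inr ⟨rfl, hq⟩, Or.inr ⟨rfl, hr⟩,
            Or.inr ⟨rfl, hs⟩, ?_, ?_, ?_, ?_, ?_⟩
          · show a₁ = (a₁.1, a₁.2 * q⁻¹) * (1, q)
            rw [Prod.mk_mul_mk, mul_one, inv_mul_cancel_right]
          · show a₂ = ((1 : G₁), r) * (1, s)
            rw [Prod.mk_mul_mk, one_mul, ← eA2']
            rw [Prod.ext_iff]
            exact ⟨by simpa using h2eq', rfl⟩
          · show b₁ = (a₁.1, a₁.2 * q⁻¹) * (1, r)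
            rw [Prod.mk_mul_mk, mul_one]
            have hb12 : b₁.2 = a₁.2 * a₂.2 * b₂.2⁻¹ := by
              rw [hsnd, mul_inv_cancel_right]
            have key2 : a₁.2 * (r * s) * (q * s)⁻¹ = a₁.2 * r * q⁻¹ := by group
            have hb12' : b₁.2 = a₁.2 * q⁻¹ * r := by
              rw [hb12, eA2', eB2', key2, mul_assoc, ← hic, ← mul_assoc]
            rw [Prod.ext_iff]
            exact ⟨by simpa using heqf.symm, by simpa using hb12'⟩
          · show b₂ = ((1 : G₁), q) * (1, s)
            rw [Prod.mk_mul_mk, one_mul, ← eB2']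
            rw [Prod.ext_iff]
            exact ⟨by simpa using hb2f, rfl⟩
          · intro z hz1 hz2
            rcases hz1 with h | ⟨he, hle⟩
            · exact Or.inl (by simpa using h)
            · rcases hz2 with h | ⟨he2, hle2⟩
              · exact Or.inl (by simpa using h)
              · exact Or.inr ⟨by simpa using he, hinf z.2 hle hle2⟩
        · -- a₁.1 = 1, a₂.1 = 1 : everything in G₂
          have h1eq' : a₁.1 = 1 := by simpa using h1eq.symm
          have h1le' : (1 : G₂) ≤ a₁.2 := by simpa using h1le
          have hb1f : b₁.1 = 1 := by rw [← heqf]; exact h1eq'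
          have hb1le : (1 : G₂) ≤ b₁.2 := by
            rcases hb₁ with h | ⟨_, h⟩
            · rw [hb1f] at h; exact absurd h (by simp)
            · simpa using h
          obtain ⟨p, q, r, s, hp, hq, hr, hs, e1, e2, e3, e4, hinf⟩ :=
            H a₁.2 a₂.2 b₁.2 b₂.2 h1le' h2le' hb1le hb2le hsnd
          refine ⟨((1 : G₁), p), ((1 : G₁), q), ((1 : G₁), r), ((1 : G₁), s),
            Or.inr ⟨rfl, hp⟩, Or.inr ⟨rfl, hq⟩, Or.inr ⟨rfl, hr⟩, Or.inr ⟨rfl, hs⟩,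
            ?_, ?_, ?_, ?_, ?_⟩
          · show a₁ = ((1 : G₁), p) * (1, q)
            rw [Prod.mk_mul_mk, one_mul, Prod.ext_iff]
            exact ⟨by simpa using h1eq', e1⟩
          · show a₂ = ((1 : G₁), r) * (1, s)
            rw [Prod.mk_mul_mk, one_mul, Prod.ext_iff]
            exact ⟨by simpa using h2eq', e2⟩
          · show b₁ = ((1 : G₁), p) * (1, r)
            rw [Prod.mk_mul_mk, one_mul, Prod.ext_iff]
            exact ⟨by simpa using hb1f, e3⟩
          · show b₂ = ((1 : G₁), q) * (1, s)
            rw [Prod.mk_mul_mk, one_mul, Prod.ext_iff]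
            exact ⟨by simpa using hb2f, e4⟩
          · intro z hz1 hz2
            rcases hz1 with h | ⟨he, hle⟩
            · exact Or.inl (by simpa using h)
            · rcases hz2 with h | ⟨he2, hle2⟩
              · exact Or.inl (by simpa using h)
              · exact Or.inr ⟨by simpa using he, hinf z.2 hle hle2⟩
    · refine ⟨b₁, b₁⁻¹ * a₁, 1, a₂, hb₁, Or.inl ?_, Or.inr ⟨rfl, le_refl _⟩, ha₂,
        (mul_inv_cancel_left b₁ a₁).symm, (one_mul a₂).symm, (mul_one b₁).symm, ?_,
        fun z _ hz2 => hz2⟩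
      · show (1 : G₁ × G₂).1 < (b₁⁻¹ * a₁).1
        have := mul_lt_mul_right hgt b₁.1⁻¹
        simpa using this
      · show b₂ = b₁⁻¹ * a₁ * a₂
        rw [mul_assoc, heq', inv_mul_cancel_left]
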